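/- Linear lower bound on the norm along a cone-confined curve: let E be a real inner product space, a ≠ 0, α ∈ (0,1), δ ∈ (0, α‖a‖/2), and let x : [0,T) → E be a C¹ curve with x(t) ∈ C_a(α) = {w : ⟨w,a⟩ ≥ α‖w‖‖a‖} and ‖x'(t) − a‖ < 2δ for all t. Then setting λ = α‖a‖ − 2δ > 0, the function t ↦ ‖x(t)‖ is strictly increasing and ‖x(t)‖ ≥ ‖x(0)‖ + λt for all t ∈ [0,T). -/

import Mathlib

open RealInnerProductSpace

/-- Derivative of the norm of a curve at a point where it is nonzero. -/
lemma hasDerivAt_norm_curve {E : Type*} [NormedAddCommGroup E] [InnerProductSpace ℝ E]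
    {x : ℝ → E} {v : E} {t : ℝ} (hx : HasDerivAt x v t) (h0 : x t ≠ 0) :
    HasDerivAt (fun s => ‖x s‖) (⟪x t, v⟫ / ‖x t‖) t := by
  have hsq : HasDerivAt (fun s => ‖x s‖ ^ 2) (2 * ⟪x t, v⟫) t := hx.norm_sq
  have hne : ‖x t‖ ^ 2 ≠ 0 := pow_ne_zero _ (norm_ne_zero_iff.mpr h0)
  have h := hsq.sqrt hne
  have heq : (fun s => Real.sqrt (‖x s‖ ^ 2)) = fun s => ‖x s‖ := by
    funext s; rw [Real.sqrt_sq (norm_nonneg _)]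
  rw [heq] at h
  convert h using 1
  rw [Real.sqrt_sq (norm_nonneg _)]
  have hn : ‖x t‖ ≠ 0 := norm_ne_zero_iff.mpr h0
  field_simp

theorem stmt19 {E : Type*} [NormedAddCommGroup E] [InnerProductSpace ℝ E]
    (a : E) (ha : a ≠ 0) (α δ T : ℝ) (hα : α ∈ Set.Ioo (0:ℝ) 1)
    (hδ : δ ∈ Set.Ioo (0:ℝ) (α * ‖a‖ / 2)) (hT : 0 < T)
    (x x' : ℝ → E)
    (hx : ∀ t ∈ Set.Ico (0:ℝ) T, HasDerivAt x (x' t) t)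
    (hx'c : ContinuousOn x' (Set.Ico 0 T))
    (hcone : ∀ t ∈ Set.Ico (0:ℝ) T, ⟪x t, a⟫ ≥ α * ‖x t‖ * ‖a‖)
    (hvel : ∀ t ∈ Set.Ico (0:ℝ) T, ‖x' t - a‖ < 2 * δ)
    (hx0 : x 0 ≠ 0) :
    StrictMonoOn (fun t => ‖x t‖) (Set.Ico 0 T) ∧
      ∀ t ∈ Set.Ico (0:ℝ) T, ‖x 0‖ + (α * ‖a‖ - 2 * δ) * t ≤ ‖x t‖ := by
  obtain ⟨hα0, hα1⟩ := hα
  obtain ⟨hδ0, hδ2⟩ := hδ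
  have hna : 0 < ‖a‖ := norm_pos_iff.mpr ha
  set lam : ℝ := α * ‖a‖ - 2 * δ with hlamdef
  have hlam0 : 0 < lam := by simp only [hlamdef]; linarith
  -- key inner product lower bound where x t ≠ 0
  have key : ∀ t ∈ Set.Ico (0:ℝ) T, x t ≠ 0 → lam ≤ ⟪x t, x' t⟫ / ‖x t‖ := by
    intro t ht h0
    have hnx : 0 < ‖x t‖ := norm_pos_iff.mpr h0
    have h1 : ⟪x t, a⟫ ≥ α * ‖x t‖ * ‖a‖ := hcone t ht
    have h2 : ‖x' t - a‖ < 2 * δ := hvel t ht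
    have h3 : -(‖x t‖ * (2 * δ)) ≤ ⟪x t, x' t - a⟫ := by
      have hcs := abs_real_inner_le_norm (x t) (x' t - a)
      have := neg_abs_le (⟪x t, x' t - a⟫ : ℝ)
      nlinarith
    have h4 : (⟪x t, x' t⟫ : ℝ) = ⟪x t, a⟫ + ⟪x t, x' t - a⟫ := by
      rw [← inner_add_right]
      congr 1
      abel
    rw [le_div_iff₀ hnx]
    nlinarith
  -- continuity of the norm on compact subintervals
  have hxc : ∀ s ∈ Set.Ico (0:ℝ) T, ContinuousOn (fun u => ‖x u‖) (Set.Icc 0 s) := by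
    intro s hs
    apply ContinuousOn.norm
    intro u hu
    exact ((hx u ⟨hu.1, lt_of_le_of_lt hu.2 hs.2⟩).continuousAt).continuousWithinAt
  -- nonvanishing
  have hnz : ∀ t ∈ Set.Ico (0:ℝ) T, x t ≠ 0 := by
    intro t ht
    by_contra h0
    have ht0 : 0 < t := by
      rcases ht.1.lt_or_eq with h | h
      · exact h
      · exact absurd (h ▸ h0) hx0
    set Z : Set ℝ := Set.Icc 0 t ∩ (fun u => ‖x u‖) ⁻¹' {0} with hZdef
    have hZne : Z.Nonempty := ⟨t, ⟨ht0.le, le_refl t⟩, by simp [h0]⟩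
    have hZclosed : IsClosed Z :=
      (hxc t ht).preimage_isClosed_of_isClosed isClosed_Icc isClosed_singleton
    have hZbdd : BddBelow Z := ⟨0, fun u hu => hu.1.1⟩
    set t₀ := sInf Z with ht₀def
    have ht₀Z : t₀ ∈ Z := hZclosed.csInf_mem hZne hZbdd
    have hxt₀ : x t₀ = 0 := norm_eq_zero.mp ht₀Z.2
    have ht₀0 : 0 < t₀ := by
      rcases ht₀Z.1.1.lt_or_eq with h | h
      · exact h
      · exact absurd (h ▸ hxt₀) hx0
    have ht₀T : t₀ ∈ Set.Ico (0:ℝ) T := ⟨ht₀Z.1.1, lt_of_le_of_lt ht₀Z.1.2 ht.2⟩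
    have hnzu : ∀ u ∈ Set.Ico (0:ℝ) t₀, x u ≠ 0 := by
      intro u hu hxu
      have : t₀ ≤ u := csInf_le hZbdd ⟨⟨hu.1, hu.2.le.trans ht₀Z.1.2⟩, by simp [hxu]⟩
      exact absurd this (not_le.mpr hu.2)
    have hmono : MonotoneOn (fun u => ‖x u‖) (Set.Icc 0 t₀) := by
      apply monotoneOn_of_deriv_nonneg (convex_Icc 0 t₀)
      · exact (hxc t ht).mono (Set.Icc_subset_Icc_right ht₀Z.1.2)
      · rw [interior_Icc]
        intro u hu
        have huT : u ∈ Set.Ico (0:ℝ) T := ⟨hu.1.le, lt_trans hu.2 ht₀T.2⟩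
        have hune : x u ≠ 0 := hnzu u ⟨hu.1.le, hu.2⟩
        exact ((hasDerivAt_norm_curve (hx u huT) hune).differentiableAt).differentiableWithinAt
      · rw [interior_Icc]
        intro u hu
        have huT : u ∈ Set.Ico (0:ℝ) T := ⟨hu.1.le, lt_trans hu.2 ht₀T.2⟩
        have hune : x u ≠ 0 := hnzu u ⟨hu.1.le, hu.2⟩
        rw [(hasDerivAt_norm_curve (hx u huT) hune).deriv]
        exact le_trans hlam0.le (key u huT hune)
    have := hmono (Set.left_mem_Icc.mpr ht₀0.le) (Set.right_mem_Icc.mpr ht₀0.le) ht₀0.le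
    simp only [hxt₀, norm_zero] at this
    exact absurd (norm_eq_zero.mp (le_antisymm this (norm_nonneg _))) hx0
  -- main monotone estimate
  have main : ∀ s ∈ Set.Ico (0:ℝ) T, ∀ t ∈ Set.Ico (0:ℝ) T, s ≤ t →
      ‖x s‖ + lam * (t - s) ≤ ‖x t‖ := by
    intro s hs t ht hst
    have hmono : MonotoneOn (fun u => ‖x u‖ - lam * u) (Set.Icc 0 t) := by
      apply monotoneOn_of_deriv_nonneg (convex_Icc 0 t)
      · exact ((hxc t ht).sub ((continuous_const.mul continuous_id).continuousOn))
      · rw [interior_Icc]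
        intro u hu
        have huT : u ∈ Set.Ico (0:ℝ) T := ⟨hu.1.le, lt_trans hu.2 ht.2⟩
        exact (((hasDerivAt_norm_curve (hx u huT) (hnz u huT)).sub
          ((hasDerivAt_id u).const_mul lam)).differentiableAt).differentiableWithinAt
      · rw [interior_Icc]
        intro u hu
        have huT : u ∈ Set.Ico (0:ℝ) T := ⟨hu.1.le, lt_trans hu.2 ht.2⟩
        have hd : HasDerivAt (fun v => ‖x v‖ - lam * v)
            (⟪x u, x' u⟫ / ‖x u‖ - lam) u := by
          exact ((hasDerivAt_norm_curve (hx u huT) (hnz u huT)).sub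
            ((hasDerivAt_id u).const_mul lam)).congr_deriv (by simp)
        rw [hd.deriv]
        have := key u huT (hnz u huT)
        linarith
    have h2 : ‖x s‖ - lam * s ≤ ‖x t‖ - lam * t :=
      hmono ⟨hs.1, hst⟩ (Set.right_mem_Icc.mpr (hs.1.trans hst)) hst
    linarith
  constructor
  · intro s hs t ht hst
    have h := main s hs t ht hst.le
    have hp : 0 < lam * (t - s) := mul_pos hlam0 (by linarith)
    show ‖x s‖ < ‖x t‖
    linarith
  · intro t ht
    have := main 0 ⟨le_refl 0, hT⟩ t ht ht.1
    linarith
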